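/- arXiv:1204.6345 — 5 statements merged into one kernel-verified Lean document; each statement's English description precedes it below -/
import Mathlib

section
/- Let A be an m × n real matrix whose columns are indexed by pairs (j,k), j = 1,…,m, k = 1,…,n_j, such that every representative submatrix of A (one column chosen from each block j) has determinant of the same nonzero sign. Then every nonzero vector x in the row space of A has a block j such that all coordinates x_{(j,1)},…,x_{(j,n_j)} are nonzero and of the same sign. -/
/-- Sign-preserving property: if all representative submatrices of a
block-column matrix `A` have determinants of the same nonzero sign, then any
nonzero vector in the row space of `A` has a block on which all its
coordinates are nonzero and of the same sign. -/
theorem p_property_sign_preserving (m : ℕ) (n : Fin m → ℕ)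
    (A : Matrix (Fin m) ((j : Fin m) × Fin (n j)) ℝ)
    (hP : (∀ r : (j : Fin m) → Fin (n j),
            0 < (Matrix.of fun i j => A i ⟨j, r j⟩ : Matrix (Fin m) (Fin m) ℝ).det) ∨
          (∀ r : (j : Fin m) → Fin (n j),
            (Matrix.of fun i j => A i ⟨j, r j⟩ : Matrix (Fin m) (Fin m) ℝ).det < 0))
    (v : Fin m → ℝ) (hv : Matrix.vecMul v A ≠ 0) :
    ∃ j : Fin m,
      (∀ k : Fin (n j), 0 < Matrix.vecMul v A ⟨j, k⟩) ∨
      (∀ k : Fin (n j), Matrix.vecMul v A ⟨j, k⟩ < 0) := by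
  classical
  by_contra hcon
  push_neg at hcon
  set x : ((j : Fin m) × Fin (n j)) → ℝ := Matrix.vecMul v A with hx
  choose kn hkn using fun j => (hcon j).1
  choose kp hkp using fun j => (hcon j).2
  set a : Fin m → ℝ := fun j => x ⟨j, kp j⟩ with ha'
  set b : Fin m → ℝ := fun j => x ⟨j, kn j⟩ with hb'
  have ha : ∀ j, 0 ≤ a j := hkp
  have hb : ∀ j, b j ≤ 0 := hkn
  set t : Fin m → ℝ := fun j =>
    if a j - b j = 0 then 0 else (-b j) / (a j - b j) with ht'
  have ht01 : ∀ j, 0 ≤ t j ∧ t j ≤ 1 := by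
    intro j
    simp only [ht']
    split_ifs with h
    · exact ⟨le_refl 0, zero_le_one⟩
    · have hab : 0 < a j - b j := lt_of_le_of_ne (by linarith [ha j, hb j]) (Ne.symm h)
      constructor
      · exact div_nonneg (by linarith [hb j]) hab.le
      · rw [div_le_one hab]; linarith [ha j]
  have htz : ∀ j, t j * a j + (1 - t j) * b j = 0 := by
    intro j
    simp only [ht']
    split_ifs with h
    · have : a j = b j := by linarith
      have hb0 : b j = 0 := le_antisymm (hb j) (this ▸ ha j)
      simp [hb0]
    · field_simp
      ring
  -- coefficients and base columns
  set coeff : Fin m → Bool → ℝ := fun j e => if e then t j else 1 - t j with hcoeff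
  have hcoeff_nonneg : ∀ j e, 0 ≤ coeff j e := by
    intro j e
    rcases ht01 j with ⟨h0, h1⟩
    cases e <;> simp [hcoeff] <;> linarith
  have hcoeff_pos : ∀ j, ∃ e, 0 < coeff j e := by
    intro j
    rcases ht01 j with ⟨h0, h1⟩
    rcases lt_or_eq_of_le h0 with h | h
    · exact ⟨true, by simpa [hcoeff] using h⟩
    · exact ⟨false, by simp [hcoeff, ← h]⟩
  set pick : Fin m → Bool → ((j : Fin m) × Fin (n j)) := fun j e =>
    ⟨j, if e then kp j else kn j⟩ with hpick
  set col : Fin m → Bool → (Fin m → ℝ) := fun j e =>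
    coeff j e • fun i => A i (pick j e) with hcol
  set N : Matrix (Fin m) (Fin m) ℝ := Matrix.of fun j => ∑ e : Bool, col j e with hN
  -- the key determinant expansion
  have f_eq : ∀ M : Matrix (Fin m) (Fin m) ℝ,
      (Matrix.detRowAlternating : (Fin m → ℝ) [⋀^Fin m]→ₗ[ℝ] ℝ).toMultilinearMap M = M.det :=
    fun _ => rfl
  have hdet : N.det = ∑ r : Fin m → Bool,
      (∏ j, coeff j (r j)) *
        (Matrix.of fun i j => A i (pick j (r j)) : Matrix (Fin m) (Fin m) ℝ).det := by
    have h1 : N.det =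
        (Matrix.detRowAlternating : (Fin m → ℝ) [⋀^Fin m]→ₗ[ℝ] ℝ).toMultilinearMap
          (fun j => ∑ e : Bool, col j e) := rfl
    rw [h1, MultilinearMap.map_sum]
    refine Finset.sum_congr rfl fun r _ => ?_
    have h2 : (fun j => col j (r j)) =
        fun j => coeff j (r j) • (fun i => A i (pick j (r j))) := rfl
    rw [h2, MultilinearMap.map_smul_univ]
    erw [f_eq]
    rw [smul_eq_mul]
    congr 1
    rw [← Matrix.det_transpose]
    rfl
  -- det N is nonzero
  have hw_exists : ∃ r : Fin m → Bool, 0 < ∏ j, coeff j (r j) := by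
    choose e he using hcoeff_pos
    exact ⟨e, Finset.prod_pos fun j _ => he j⟩
  have hdet_ne : N.det ≠ 0 := by
    obtain ⟨r0, hr0⟩ := hw_exists
    rcases hP with hpos | hneg
    · have : 0 < N.det := by
        rw [hdet]
        refine Finset.sum_pos' (fun r _ => ?_) ⟨r0, Finset.mem_univ r0, ?_⟩
        · exact mul_nonneg (Finset.prod_nonneg fun j _ => hcoeff_nonneg j (r j))
            (le_of_lt (hpos fun j => if r j then kp j else kn j))
        · exact mul_pos hr0 (hpos fun j => if r0 j then kp j else kn j)
      exact ne_of_gt this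
    · have : 0 < -N.det := by
        rw [hdet, ← Finset.sum_neg_distrib]
        refine Finset.sum_pos' (fun r _ => ?_) ⟨r0, Finset.mem_univ r0, ?_⟩
        · rw [neg_mul_eq_mul_neg]
          exact mul_nonneg (Finset.prod_nonneg fun j _ => hcoeff_nonneg j (r j))
            (le_of_lt (neg_pos.mpr (hneg fun j => if r j then kp j else kn j)))
        · rw [neg_mul_eq_mul_neg]
          exact mul_pos hr0 (neg_pos.mpr (hneg fun j => if r0 j then kp j else kn j))
      intro h; rw [h] at this; simp at this
  -- v annihilates N.transpose
  have hvN : Matrix.vecMul v N.transpose = 0 := by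
    funext j
    have hxs : ∀ p, x p = ∑ i, v i * A i p := by
      intro p
      simp [hx, Matrix.vecMul, dotProduct]
    have : Matrix.vecMul v N.transpose j = ∑ i, v i * N j i := by
      simp [Matrix.vecMul, dotProduct, Matrix.transpose_apply]
    rw [this]
    have hNji : ∀ i, N j i = t j * A i (pick j true) + (1 - t j) * A i (pick j false) := by
      intro i
      simp [hN, hcol, hcoeff, Fintype.sum_bool]
    simp only [hNji, Pi.zero_apply]
    have expand : ∑ i, v i * (t j * A i (pick j true) + (1 - t j) * A i (pick j false)) =
        t j * (∑ i, v i * A i (pick j true)) + (1 - t j) * (∑ i, v i * A i (pick j false)) := by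
      rw [Finset.mul_sum, Finset.mul_sum, ← Finset.sum_add_distrib]
      refine Finset.sum_congr rfl fun i _ => by ring
    rw [expand, ← hxs, ← hxs]
    have hpa : x (pick j true) = a j := by simp [hpick, ha']
    have hpb : x (pick j false) = b j := by simp [hpick, hb']
    rw [hpa, hpb]
    exact htz j
  -- conclude v = 0, contradiction
  have hvz : v = 0 := by
    have hdetT : N.transpose.det ≠ 0 := by rwa [Matrix.det_transpose]
    have hU : IsUnit N.transpose.det := isUnit_iff_ne_zero.mpr hdetT
    have := congrArg (fun w => Matrix.vecMul w (N.transpose)⁻¹) hvN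
    simpa [Matrix.vecMul_vecMul, Matrix.mul_nonsing_inv _ hU, Matrix.vecMul_one,
      Matrix.zero_vecMul] using this
  exact hv (by rw [hx, hvz, Matrix.zero_vecMul])
end

section
/- Let A be an m × n matrix with the P-property with columns indexed by pairs (j,k). Suppose there exists an m × m matrix X and a strictly positive p ∈ ℝᵐ such that (XA)_{i,(j,k)} > 0 for i = j, (XA)_{i,(j,k)} ≤ 0 for i ≠ j, and pᵀXA > 0 entrywise. Then there exists b ∈ ℝᵐ such that for every representative submatrix C of A, the solution of C x = b is entrywise strictly positive. -/
open Finset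

/-- Z-matrix with positive left vector `p`: a nonnegative right-hand side forces a
nonnegative solution. -/
lemma zkey {m : ℕ} (M : Matrix (Fin m) (Fin m) ℝ) (p : Fin m → ℝ) (hp : ∀ i, 0 < p i)
    (hoff : ∀ i j, i ≠ j → M i j ≤ 0) (hq : ∀ j, 0 < Matrix.vecMul p M j)
    (x c : Fin m → ℝ) (hx : M.mulVec x = c) (hc : ∀ i, 0 ≤ c i) : ∀ i, 0 ≤ x i := by
  by_contra h
  push_neg at h
  obtain ⟨i0, hi0⟩ := h
  set S := Finset.univ.filter (fun i => x i < 0) with hSdef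
  have hi0S : i0 ∈ S := by simp [hSdef, hi0]
  have hq' : ∀ j, Matrix.vecMul p M j = ∑ i, p i * M i j := by
    intro j; simp [Matrix.vecMul, dotProduct]
  have hmv : ∀ i, c i = ∑ j, M i j * x j := by
    intro i; rw [← hx]; simp [Matrix.mulVec, dotProduct]
  have h1 : (0:ℝ) ≤ ∑ i ∈ S, p i * c i :=
    Finset.sum_nonneg fun i _ => mul_nonneg (hp i).le (hc i)
  have h2 : ∑ i ∈ S, p i * c i = ∑ j, x j * (∑ i ∈ S, p i * M i j) := by
    calc ∑ i ∈ S, p i * c i = ∑ i ∈ S, ∑ j, p i * M i j * x j := by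
          refine Finset.sum_congr rfl fun i _ => ?_
          rw [hmv i, Finset.mul_sum]
          exact Finset.sum_congr rfl fun j _ => by ring
      _ = ∑ j, ∑ i ∈ S, p i * M i j * x j := Finset.sum_comm
      _ = ∑ j, x j * (∑ i ∈ S, p i * M i j) := by
          refine Finset.sum_congr rfl fun j _ => ?_
          rw [Finset.mul_sum]
          exact Finset.sum_congr rfl fun i _ => by ring
  have hinner : ∀ j ∈ S, (0:ℝ) < ∑ i ∈ S, p i * M i j := by
    intro j hjS
    have hj : x j < 0 := by simpa [hSdef] using hjS
    have hsplit : (∑ i ∈ S, p i * M i j)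
        + ∑ i ∈ Finset.univ.filter (fun i => ¬ x i < 0), p i * M i j
        = ∑ i, p i * M i j := Finset.sum_filter_add_sum_filter_not _ _ _
    have hrest : ∑ i ∈ Finset.univ.filter (fun i => ¬ x i < 0), p i * M i j ≤ 0 := by
      refine Finset.sum_nonpos fun i hi => ?_
      simp only [Finset.mem_filter] at hi
      have hij : i ≠ j := fun h => hi.2 (h ▸ hj)
      exact mul_nonpos_of_nonneg_of_nonpos (hp i).le (hoff i j hij)
    have := hq j
    rw [hq' j, ← hsplit] at this
    linarith
  have hbound : ∀ j, x j * (∑ i ∈ S, p i * M i j) ≤ 0 := by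
    intro j
    by_cases hj : x j < 0
    · exact mul_nonpos_of_nonpos_of_nonneg hj.le
        (hinner j (by simp [hSdef, hj])).le
    · push_neg at hj
      have hsum : (∑ i ∈ S, p i * M i j) ≤ 0 := by
        refine Finset.sum_nonpos fun i hi => ?_
        simp only [hSdef, Finset.mem_filter] at hi
        have hij : i ≠ j := fun h => absurd (h ▸ hi.2) (not_lt.mpr hj)
        exact mul_nonpos_of_nonneg_of_nonpos (hp i).le (hoff i j hij)
      exact mul_nonpos_of_nonneg_of_nonpos hj hsum
  have hstrict : ∑ j, x j * (∑ i ∈ S, p i * M i j) < ∑ _j : Fin m, (0:ℝ) := by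
    refine Finset.sum_lt_sum (fun j _ => hbound j) ⟨i0, Finset.mem_univ _, ?_⟩
    exact mul_neg_of_neg_of_pos hi0 (hinner i0 hi0S)
  simp only [Finset.sum_const_zero] at hstrict
  linarith [h1, h2 ▸ h1]

/-- Strict version: positive right-hand side gives strictly positive solution. -/
lemma zkey_pos {m : ℕ} (M : Matrix (Fin m) (Fin m) ℝ) (p : Fin m → ℝ) (hp : ∀ i, 0 < p i)
    (hoff : ∀ i j, i ≠ j → M i j ≤ 0) (hq : ∀ j, 0 < Matrix.vecMul p M j)
    (x c : Fin m → ℝ) (hx : M.mulVec x = c) (hc : ∀ i, 0 < c i) : ∀ i, 0 < x i := by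
  have hnn := zkey M p hp hoff hq x c hx fun i => (hc i).le
  intro i
  rcases lt_or_eq_of_le (hnn i) with h | h
  · exact h
  have hci : c i = ∑ j, M i j * x j := by
    rw [← hx]; simp [Matrix.mulVec, dotProduct]
  have : c i ≤ 0 := by
    rw [hci]
    refine Finset.sum_nonpos fun j _ => ?_
    by_cases hij : i = j
    · rw [← hij, ← h]; simp
    · exact mul_nonpos_of_nonpos_of_nonneg (hoff i j hij) (hnn j)
  exact absurd this (not_le.mpr (hc i))

/-- Theorem 2, (2) ⟹ (3): if some `X` brings `A` into Z-form and a positive `p`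
has `pᵀXA > 0`, then there is `b` whose representative systems all have
strictly positive solutions. -/
theorem Z_form_pos_vector_implies_good_b (m : ℕ) (n : Fin m → ℕ)
    (A : Matrix (Fin m) ((j : Fin m) × Fin (n j)) ℝ)
    (hP : (∀ r : (j : Fin m) → Fin (n j),
            0 < (Matrix.of fun i j => A i ⟨j, r j⟩ : Matrix (Fin m) (Fin m) ℝ).det) ∨
          (∀ r : (j : Fin m) → Fin (n j),
            (Matrix.of fun i j => A i ⟨j, r j⟩ : Matrix (Fin m) (Fin m) ℝ).det < 0))
    (X : Matrix (Fin m) (Fin m) ℝ) (p : Fin m → ℝ) (hp : ∀ i, 0 < p i)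
    (hpos : ∀ i : Fin m, ∀ j : Fin m, ∀ k : Fin (n j), i = j → 0 < (X * A) i ⟨j, k⟩)
    (hnonpos : ∀ i : Fin m, ∀ j : Fin m, ∀ k : Fin (n j), i ≠ j → (X * A) i ⟨j, k⟩ ≤ 0)
    (hpXA : ∀ c : (j : Fin m) × Fin (n j), 0 < Matrix.vecMul p (X * A) c) :
    ∃ b : Fin m → ℝ, ∀ r : (j : Fin m) → Fin (n j), ∀ x : Fin m → ℝ,
      (Matrix.of fun i j => A i ⟨j, r j⟩ : Matrix (Fin m) (Fin m) ℝ).mulVec x = b →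
        ∀ i, 0 < x i := by
  classical
  by_cases hn : ∀ j, 0 < n j
  swap
  · push_neg at hn
    obtain ⟨j0, hj0⟩ := hn
    refine ⟨0, fun r => ?_⟩
    have hr := r j0
    rw [Nat.le_zero.mp hj0] at hr
    exact hr.elim0
  -- representative submatrices
  set C : ((j : Fin m) → Fin (n j)) → Matrix (Fin m) (Fin m) ℝ :=
    fun r => Matrix.of fun i j => A i ⟨j, r j⟩ with hCdef
  -- basic facts about M r := X * C r
  have hMA : ∀ r i j, (X * C r) i j = (X * A) i ⟨j, r j⟩ := by
    intro r i j
    simp [Matrix.mul_apply, hCdef]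
  have hMoff : ∀ r, ∀ i j, i ≠ j → (X * C r) i j ≤ 0 := by
    intro r i j hij; rw [hMA]; exact hnonpos i j (r j) hij
  have hMq : ∀ r j, 0 < Matrix.vecMul p (X * C r) j := by
    intro r j
    have : Matrix.vecMul p (X * C r) j = Matrix.vecMul p (X * A) ⟨j, r j⟩ := by
      simp only [Matrix.vecMul, dotProduct]
      exact Finset.sum_congr rfl fun i _ => by rw [hMA]
    rw [this]; exact hpXA _
  -- each C r is invertible
  have hCdet : ∀ r, IsUnit (C r).det := by
    intro r
    rcases hP with h | h
    · exact isUnit_iff_ne_zero.mpr (ne_of_gt (h r))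
    · exact isUnit_iff_ne_zero.mpr (ne_of_lt (h r))
  -- X is invertible
  set r0 : (j : Fin m) → Fin (n j) := fun j => ⟨0, hn j⟩ with hr0
  have hXker : ∀ v : Fin m → ℝ, X.mulVec v = 0 → v = 0 := by
    intro v hv
    set w := (C r0)⁻¹.mulVec v with hw
    have hCw : (C r0).mulVec w = v := by
      rw [hw, Matrix.mulVec_mulVec, Matrix.mul_nonsing_inv _ (hCdet r0), Matrix.one_mulVec]
    have hMw : (X * C r0).mulVec w = 0 := by
      rw [← Matrix.mulVec_mulVec, hCw, hv]
    have hw0 : w = 0 := by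
      funext i
      have h1 := zkey (X * C r0) p hp (hMoff r0) (hMq r0) w 0 hMw (fun _ => le_refl 0) i
      have h2 := zkey (X * C r0) p hp (hMoff r0) (hMq r0) (-w) 0
        (by rw [Matrix.mulVec_neg, hMw, neg_zero]) (fun _ => le_refl 0) i
      simp only [Pi.neg_apply, Left.nonneg_neg_iff] at h2
      exact le_antisymm h2 h1
    rw [← hCw, hw0, Matrix.mulVec_zero]
  have hXinj : Function.Injective X.mulVec := by
    intro u v huv
    have h0 : X.mulVec (u - v) = 0 := by
      rw [Matrix.mulVec_sub, huv, sub_self]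
    exact sub_eq_zero.mp (hXker _ h0)
  have hXunit : IsUnit X.det :=
    (Matrix.isUnit_iff_isUnit_det X).mp (Matrix.mulVec_injective_iff_isUnit.mp hXinj)
  -- the good b
  refine ⟨X⁻¹.mulVec 1, fun r x hx => ?_⟩
  have hXb : X.mulVec (X⁻¹.mulVec 1) = 1 := by
    rw [Matrix.mulVec_mulVec, Matrix.mul_nonsing_inv _ hXunit, Matrix.one_mulVec]
  have hMx : (X * C r).mulVec x = 1 := by
    rw [← Matrix.mulVec_mulVec, hx, hXb]
  exact zkey_pos (X * C r) p hp (hMoff r) (hMq r) x 1 hMx (fun _ => one_pos)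
end

section
/- Let A be an m × n matrix with the P-property, and suppose there is b ∈ ℝᵐ such that for every representative submatrix C of A the solution to C x = b is positive. Then, with X̄ denoting the complementary Z-form matrix of A, there exists a strictly positive vector p ∈ ℝᵐ with pᵀ(X̄A) > 0 entrywise. -/
open Finset Matrix

/-- determinant of a matrix whose columns are convex combinations, sign control -/
lemma det_convex_sign (m : ℕ) (n : Fin m → ℕ) (s : ℝ)
    (v : (j : Fin m) → Fin (n j) → (Fin m → ℝ))
    (w : (j : Fin m) → Fin (n j) → ℝ)
    (hw0 : ∀ j k, 0 ≤ w j k) (hw1 : ∀ j, ∑ k, w j k = 1)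
    (hv : ∀ r : (j : Fin m) → Fin (n j),
      0 < s * (Matrix.of fun i j => v j (r j) i : Matrix (Fin m) (Fin m) ℝ).det) :
    0 < s * (Matrix.of fun i j => ∑ k, w j k * v j k i : Matrix (Fin m) (Fin m) ℝ).det := by
  classical
  set f := (Matrix.detRowAlternating : (Fin m → ℝ) [⋀^Fin m]→ₗ[ℝ] ℝ).toMultilinearMap with hf
  have hrepr : ∀ u : Fin m → (Fin m → ℝ),
      (Matrix.of fun i j => u j i : Matrix (Fin m) (Fin m) ℝ).det = f u := by
    intro u
    rw [show (Matrix.of fun i j => u j i : Matrix (Fin m) (Fin m) ℝ)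
        = (Matrix.of fun j i => u j i : Matrix (Fin m) (Fin m) ℝ).transpose from by ext i j; rfl,
      Matrix.det_transpose]
    rfl
  have hcols : (Matrix.of fun i j => ∑ k, w j k * v j k i : Matrix (Fin m) (Fin m) ℝ)
      = Matrix.of fun i j => (∑ k, w j k • v j k) i := by
    ext i j
    simp [Finset.sum_apply]
  rw [hcols, hrepr]
  have expand := f.map_sum_finset (A := fun j => (Finset.univ : Finset (Fin (n j))))
      (g := fun j k => w j k • v j k)
  rw [expand]
  have hterm : ∀ r : (j : Fin m) → Fin (n j),
      (f fun j => w j (r j) • v j (r j)) = (∏ j, w j (r j)) * (f fun j => v j (r j)) :=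
    fun r => f.map_smul_univ _ _
  -- coefficients sum to one
  have hcoef : ∑ r ∈ Fintype.piFinset (fun j => (Finset.univ : Finset (Fin (n j)))),
      (∏ j, w j (r j)) = 1 := by
    rw [← Finset.prod_univ_sum]
    simp [hw1]
  have hex : ∃ r ∈ Fintype.piFinset (fun j => (Finset.univ : Finset (Fin (n j)))),
      0 < (∏ j, w j (r j)) := by
    by_contra h
    push_neg at h
    have : ∑ r ∈ Fintype.piFinset (fun j => (Finset.univ : Finset (Fin (n j)))),
        (∏ j, w j (r j)) = 0 := by
      apply Finset.sum_eq_zero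
      intro r hr
      exact le_antisymm (h r hr) (Finset.prod_nonneg fun j _ => hw0 j (r j))
    rw [this] at hcoef; norm_num at hcoef
  rw [Finset.mul_sum]
  apply Finset.sum_pos'
  · intro r _
    rw [hterm r]
    have := hv r
    rw [hrepr] at this
    have hnn : (0:ℝ) ≤ ∏ j, w j (r j) := Finset.prod_nonneg fun j _ => hw0 j (r j)
    nlinarith
  · obtain ⟨r, hr, hrpos⟩ := hex
    refine ⟨r, hr, ?_⟩
    rw [hterm r]
    have := hv r
    rw [hrepr] at this
    nlinarith

lemma cramer_of_mulVec {m : ℕ} (M : Matrix (Fin m) (Fin m) ℝ) (x : Fin m → ℝ) :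
    Matrix.cramer M (M.mulVec x) = M.det • x := by
  rw [Matrix.cramer_eq_adjugate_mulVec, Matrix.mulVec_mulVec, Matrix.adjugate_mul,
    Matrix.smul_mulVec, Matrix.one_mulVec]

/-- Theorem 2, (3) ⟹ (1): if some `b` makes all representative systems of `A`
have positive solutions, then there is a positive `p` with `pᵀ(X̄A) > 0` for
the complementary Z-form matrix `X̄`. -/
theorem good_b_implies_pos_vector_for_Z_form (m : ℕ) (n : Fin m → ℕ)
    (A : Matrix (Fin m) ((j : Fin m) × Fin (n j)) ℝ)
    (hP : (∀ r : (j : Fin m) → Fin (n j),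
            0 < (Matrix.of fun i j => A i ⟨j, r j⟩ : Matrix (Fin m) (Fin m) ℝ).det) ∨
          (∀ r : (j : Fin m) → Fin (n j),
            (Matrix.of fun i j => A i ⟨j, r j⟩ : Matrix (Fin m) (Fin m) ℝ).det < 0))
    (b : Fin m → ℝ)
    (hb : ∀ r : (j : Fin m) → Fin (n j), ∀ x : Fin m → ℝ,
      (Matrix.of fun i j => A i ⟨j, r j⟩ : Matrix (Fin m) (Fin m) ℝ).mulVec x = b →
        ∀ i, 0 < x i)
    (X : Matrix (Fin m) (Fin m) ℝ)
    (hpos : ∀ i : Fin m, ∀ j : Fin m, ∀ k : Fin (n j), i = j → 0 < (X * A) i ⟨j, k⟩)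
    (hnonpos : ∀ i : Fin m, ∀ j : Fin m, ∀ k : Fin (n j), i ≠ j → (X * A) i ⟨j, k⟩ ≤ 0)
    (hzero : ∀ i : Fin m, ∀ j : Fin m, i ≠ j → ∃ k : Fin (n j), (X * A) i ⟨j, k⟩ = 0) :
    ∃ p : Fin m → ℝ, (∀ i, 0 < p i) ∧
      ∀ c : (j : Fin m) × Fin (n j), 0 < Matrix.vecMul p (X * A) c := by
  classical
  -- trivial case: no columns at all
  by_cases hcol : IsEmpty ((j : Fin m) × Fin (n j))
  · exact ⟨fun _ => 1, fun _ => one_pos, fun c => (hcol.false c).elim⟩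
  rw [not_isEmpty_iff] at hcol
  obtain ⟨c₀⟩ := hcol
  -- every block is nonempty
  have hn : ∀ j, 0 < n j := by
    intro j
    by_cases hm : ∃ i : Fin m, i ≠ j
    · obtain ⟨i, hi⟩ := hm
      obtain ⟨k, -⟩ := hzero i j hi
      exact k.pos
    · push_neg at hm
      have h1 : c₀.1 = j := hm c₀.1
      exact h1 ▸ c₀.2.pos
  -- representative matrices
  set M : ((j : Fin m) → Fin (n j)) → Matrix (Fin m) (Fin m) ℝ :=
    fun r => Matrix.of fun i j => A i ⟨j, r j⟩ with hM
  obtain ⟨s, hs⟩ : ∃ s : ℝ, ∀ r, 0 < s * (M r).det := by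
    rcases hP with h | h
    · exact ⟨1, fun r => by simpa using h r⟩
    · refine ⟨-1, fun r => ?_⟩
      have := h r
      simp only [hM]
      nlinarith
  have hdet : ∀ r, (M r).det ≠ 0 := by
    intro r h
    have := hs r
    rw [h] at this; simp at this
  -- positive solutions of the representative systems
  set xr : ((j : Fin m) → Fin (n j)) → (Fin m → ℝ) := fun r => (M r)⁻¹.mulVec b with hxrdef
  have hMx : ∀ r, (M r).mulVec (xr r) = b := by
    intro r
    rw [hxrdef]
    rw [Matrix.mulVec_mulVec, Matrix.mul_nonsing_inv _ (isUnit_iff_ne_zero.mpr (hdet r)),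
      Matrix.one_mulVec]
  have hxr : ∀ r i, 0 < xr r i := fun r => hb r (xr r) (hMx r)
  have hcramM : ∀ r j, Matrix.cramer (M r) b j = (M r).det * xr r j := by
    intro r j
    conv_lhs => rw [← hMx r]
    rw [cramer_of_mulVec]
    simp
  -- positivity of q = X b
  set q : Fin m → ℝ := X.mulVec b with hqdef
  have hq : ∀ i, 0 < q i := by
    intro i
    set r : (j : Fin m) → Fin (n j) :=
      fun j => if h : i = j then ⟨0, hn j⟩ else (hzero i j h).choose with hr
    have hq1 : q = (X * M r).mulVec (xr r) := by
      rw [hqdef, ← hMx r, Matrix.mulVec_mulVec]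
    have hXA : ∀ j, (X * M r) i j = (X * A) i ⟨j, r j⟩ := by
      intro j
      simp [Matrix.mul_apply, hM]
    rw [hq1]
    have h2 : (X * M r).mulVec (xr r) i = ∑ j, (X * M r) i j * xr r j := by
      simp [Matrix.mulVec, dotProduct]
    rw [h2, Finset.sum_eq_single i]
    · rw [hXA i]
      exact mul_pos (hpos i i (r i) rfl) (hxr r i)
    · intro j _ hji
      have hij : i ≠ j := fun h => hji h.symm
      rw [hXA j]
      have hrj : r j = (hzero i j hij).choose := by
        rw [hr]; exact dif_neg hij
      rw [hrj, (hzero i j hij).choose_spec, zero_mul]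
    · intro h; exact absurd (Finset.mem_univ i) h
  -- the Gordan-type separation step
  set gcols : (((j : Fin m) × Fin (n j)) ⊕ Fin m) → (Fin m → ℝ) :=
    Sum.elim (fun c i => (X * A) i c) (fun i0 => Pi.single i0 1) with hgcols
  have h0 : (0 : Fin m → ℝ) ∉ convexHull ℝ (Set.range gcols) := by
    intro hmem
    rw [convexHull_range_eq_exists_affineCombination] at hmem
    obtain ⟨t, w, hw0, hw1, hcomb⟩ := hmem
    rw [Finset.affineCombination_eq_linear_combination _ _ _ hw1] at hcomb
    set Y : (((j : Fin m) × Fin (n j)) ⊕ Fin m) → ℝ := fun a => if a ∈ t then w a else 0 with hY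
    have hY0 : ∀ a, 0 ≤ Y a := by
      intro a; rw [hY]; dsimp only; split
      · exact hw0 a ‹_›
      · exact le_refl 0
    have hYsum : ∑ a, Y a = 1 := by
      rw [hY]
      rw [Finset.sum_ite_mem, Finset.univ_inter, hw1]
    have hYcomb : ∑ a, Y a • gcols a = 0 := by
      rw [hY]
      simp only [ite_smul, zero_smul]
      rw [Finset.sum_ite_mem, Finset.univ_inter, hcomb]
    set y : ((j : Fin m) × Fin (n j)) → ℝ := fun c => Y (Sum.inl c) with hy
    set z : Fin m → ℝ := fun i => Y (Sum.inr i) with hz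
    have hby : ∀ i, ∑ c, y c * (X * A) i c = - z i := by
      intro i
      have h1 := congrFun hYcomb i
      rw [Finset.sum_apply] at h1
      rw [Fintype.sum_sum_type] at h1
      simp only [Pi.smul_apply, smul_eq_mul, Pi.zero_apply] at h1
      have h2 : ∑ i0, Y (Sum.inr i0) * gcols (Sum.inr i0) i = z i := by
        simp only [hgcols, Sum.elim_inr, Pi.single_apply, mul_ite, mul_one, mul_zero]
        rw [Finset.sum_ite_eq Finset.univ i (fun i0 => Y (Sum.inr i0))]
        simp [hz]
      rw [h2] at h1
      have h3 : ∀ c, Y (Sum.inl c) * gcols (Sum.inl c) i = y c * (X * A) i c := by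
        intro c; rfl
      rw [Finset.sum_congr rfl (fun c _ => h3 c)] at h1
      linarith
    have hyex : ∃ c, 0 < y c := by
      by_contra hcon
      push_neg at hcon
      have hy0 : ∀ c, y c = 0 := fun c => le_antisymm (hcon c) (hY0 _)
      have hz0' : ∀ i, z i = 0 := by
        intro i
        have h4 := hby i
        have h5 : ∑ c, y c * (X * A) i c = 0 := by
          apply Finset.sum_eq_zero; intro c _; rw [hy0 c, zero_mul]
        rw [h5] at h4; linarith
      have h6 : ∑ a, Y a = 0 := by
        rw [Fintype.sum_sum_type]
        have e1 : ∑ c, Y (Sum.inl c) = 0 := by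
          apply Finset.sum_eq_zero; intro c _; exact hy0 c
        have e2 : ∑ i, Y (Sum.inr i) = 0 := by
          apply Finset.sum_eq_zero; intro i _; exact hz0' i
        rw [e1, e2, add_zero]
      rw [hYsum] at h6; norm_num at h6
    obtain ⟨cstar, hcstar⟩ := hyex
    set x : Fin m → ℝ := fun j => ∑ k, y ⟨j, k⟩ with hx
    have hx0 : ∀ j, 0 ≤ x j := fun j => Finset.sum_nonneg fun k _ => hY0 _
    have hxstar : 0 < x cstar.1 := by
      have h7 : y ⟨cstar.1, cstar.2⟩ ≤ x cstar.1 :=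
        Finset.single_le_sum (f := fun k => y ⟨cstar.1, k⟩) (fun k _ => hY0 _) (Finset.mem_univ _)
      rw [Sigma.eta] at h7
      linarith
    set w' : (j : Fin m) → Fin (n j) → ℝ :=
      fun j k => if 0 < x j then y ⟨j, k⟩ / x j else if k = ⟨0, hn j⟩ then 1 else 0 with hw'
    have hw'0 : ∀ j k, 0 ≤ w' j k := by
      intro j k; rw [hw']; dsimp only; split
      · exact div_nonneg (hY0 _) (le_of_lt ‹_›)
      · split
        · norm_num
        · norm_num
    have hw'1 : ∀ j, ∑ k, w' j k = 1 := by
      intro j; rw [hw']; dsimp only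
      by_cases hj : 0 < x j
      · simp only [if_pos hj]
        rw [← Finset.sum_div]
        exact div_self (ne_of_gt hj)
      · simp only [if_neg hj]
        rw [Finset.sum_ite_eq' Finset.univ (⟨0, hn j⟩ : Fin (n j)) (fun _ => (1:ℝ))]
        simp
    have hw'y : ∀ j, ∀ g : Fin (n j) → ℝ,
        (∑ k, w' j k * g k) * x j = ∑ k, y ⟨j, k⟩ * g k := by
      intro j g
      by_cases hj : 0 < x j
      · simp only [hw', if_pos hj]
        rw [Finset.sum_mul]
        apply Finset.sum_congr rfl
        intro k _
        field_simp
      · have hxj : x j = 0 := le_antisymm (not_lt.1 hj) (hx0 j)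
        have hsumy : ∑ k, y ⟨j, k⟩ = 0 := hxj
        have hyjk : ∀ k ∈ Finset.univ, y ⟨j, k⟩ = 0 :=
          (Finset.sum_eq_zero_iff_of_nonneg (fun k _ => hY0 _)).1 hsumy
        rw [hxj, mul_zero]
        symm; apply Finset.sum_eq_zero; intro k hk
        rw [hyjk k hk, zero_mul]
    set Amix : Matrix (Fin m) (Fin m) ℝ :=
      Matrix.of (fun i j => ∑ k, w' j k * A i ⟨j, k⟩) with hAmix
    have hdetmix : 0 < s * Amix.det :=
      det_convex_sign m n s (fun j k i => A i ⟨j, k⟩) w' hw'0 hw'1 (fun r => hs r)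
    have hdetmix' : Amix.det ≠ 0 := by
      intro h; rw [h] at hdetmix; simp at hdetmix
    set xt : Fin m → ℝ := Amix⁻¹.mulVec b with hxt
    have hAxt : Amix.mulVec xt = b := by
      rw [hxt, Matrix.mulVec_mulVec, Matrix.mul_nonsing_inv _ (isUnit_iff_ne_zero.mpr hdetmix'),
        Matrix.one_mulVec]
    have hcrammix : Matrix.cramer Amix b = Amix.det • xt := by
      conv_lhs => rw [← hAxt]
      rw [cramer_of_mulVec]
    have hxtpos : ∀ j, 0 < xt j := by
      intro j0
      have h1 : 0 < s * (Matrix.of (fun i j => ∑ k, w' j k *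
          (if j = j0 then b i else A i ⟨j, k⟩)) : Matrix (Fin m) (Fin m) ℝ).det := by
        apply det_convex_sign m n s (fun j k i => if j = j0 then b i else A i ⟨j, k⟩) w' hw'0 hw'1
        intro r
        have heq : (Matrix.of fun i j => if j = j0 then b i else A i ⟨j, r j⟩ :
            Matrix (Fin m) (Fin m) ℝ) = (M r).updateCol j0 b := by
          ext i j
          rw [Matrix.updateCol_apply]
          by_cases h : j = j0 <;> simp [h, hM]
        have heq' : (Matrix.of fun i j => (fun j k i => if j = j0 then b i else A i ⟨j, k⟩) j (r j) i :
            Matrix (Fin m) (Fin m) ℝ) = (M r).updateCol j0 b := heq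
        rw [heq', ← Matrix.cramer_apply, hcramM r j0]
        have h8 := mul_pos (hs r) (hxr r j0)
        nlinarith
      have heq2 : (Matrix.of (fun i j => ∑ k, w' j k * (if j = j0 then b i else A i ⟨j, k⟩)) :
          Matrix (Fin m) (Fin m) ℝ) = Amix.updateCol j0 b := by
        ext i j
        rw [Matrix.updateCol_apply]
        by_cases h : j = j0
        · subst h
          simp only [Matrix.of_apply, if_pos]
          rw [← Finset.sum_mul, hw'1, one_mul]
        · simp [h, hAmix]
      rw [heq2, ← Matrix.cramer_apply, hcrammix] at h1
      have h9 : (Amix.det • xt) j0 = Amix.det * xt j0 := rfl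
      rw [h9] at h1
      nlinarith
    have hBt : ∀ i j, (X * Amix) i j = ∑ k, w' j k * (X * A) i ⟨j, k⟩ := by
      intro i j
      rw [Matrix.mul_apply]
      simp only [hAmix, Matrix.of_apply]
      calc ∑ l, X i l * ∑ k, w' j k * A l ⟨j, k⟩
          = ∑ l, ∑ k, w' j k * (X i l * A l ⟨j, k⟩) := by
            apply Finset.sum_congr rfl; intro l _
            rw [Finset.mul_sum]
            apply Finset.sum_congr rfl; intro k _; ring
        _ = ∑ k, ∑ l, w' j k * (X i l * A l ⟨j, k⟩) := Finset.sum_comm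
        _ = ∑ k, w' j k * (X * A) i ⟨j, k⟩ := by
            apply Finset.sum_congr rfl; intro k _
            rw [Matrix.mul_apply, Finset.mul_sum]
    have hBoff : ∀ i j, i ≠ j → (X * Amix) i j ≤ 0 := by
      intro i j hij
      rw [hBt]
      apply Finset.sum_nonpos
      intro k _
      exact mul_nonpos_of_nonneg_of_nonpos (hw'0 j k) (hnonpos i j k hij)
    have hBx : ∀ i, ((X * Amix).mulVec x) i ≤ 0 := by
      intro i
      have e1 : ((X * Amix).mulVec x) i = ∑ j, (∑ k, w' j k * (X * A) i ⟨j, k⟩) * x j := by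
        simp only [Matrix.mulVec, dotProduct]
        apply Finset.sum_congr rfl; intro j _
        rw [hBt]
      rw [e1]
      rw [Finset.sum_congr rfl (fun j _ => hw'y j (fun k => (X * A) i ⟨j, k⟩))]
      have e2 : ∑ j, ∑ k, y ⟨j, k⟩ * (X * A) i ⟨j, k⟩ = ∑ c, y c * (X * A) i c := by
        conv_rhs => rw [← Finset.univ_sigma_univ, Finset.sum_sigma]
      rw [e2, hby i]
      have hzi : 0 ≤ z i := hY0 (Sum.inr i)
      linarith
    have hBxt : (X * Amix).mulVec xt = q := by
      rw [← Matrix.mulVec_mulVec, hAxt, hqdef]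
    set S' : Finset (Fin m) := Finset.univ.filter (fun j => 0 < x j) with hS'
    have hS'ne : S'.Nonempty := ⟨cstar.1, by simp [hS', hxstar]⟩
    obtain ⟨j0, hj0S, hj0min⟩ := S'.exists_min_image (fun j => xt j / x j) hS'ne
    have hxj0 : 0 < x j0 := by
      rw [hS'] at hj0S
      exact (Finset.mem_filter.1 hj0S).2
    set tb : ℝ := xt j0 / x j0 with htb
    have htbpos : 0 < tb := div_pos (hxtpos j0) hxj0
    set z' : Fin m → ℝ := fun j => xt j - tb * x j with hz'
    have hz'0 : z' j0 = 0 := by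
      rw [hz']; dsimp only; rw [htb]
      field_simp
      ring
    have hz'nn : ∀ j, 0 ≤ z' j := by
      intro j
      by_cases hj : 0 < x j
      · have hjS : j ∈ S' := by rw [hS']; exact Finset.mem_filter.2 ⟨Finset.mem_univ _, hj⟩
        have hle : tb ≤ xt j / x j := hj0min j hjS
        rw [hz']; dsimp only
        rw [sub_nonneg]
        calc tb * x j ≤ (xt j / x j) * x j := mul_le_mul_of_nonneg_right hle (le_of_lt hj)
          _ = xt j := by field_simp
      · have hxj : x j = 0 := le_antisymm (not_lt.1 hj) (hx0 j)
        rw [hz']; dsimp only; rw [hxj, mul_zero, sub_zero]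
        exact le_of_lt (hxtpos j)
    have hval1 : ((X * Amix).mulVec z') j0 = q j0 - tb * ((X * Amix).mulVec x) j0 := by
      conv_rhs => rw [← hBxt]
      simp only [Matrix.mulVec, dotProduct, hz']
      rw [Finset.mul_sum, ← Finset.sum_sub_distrib]
      apply Finset.sum_congr rfl
      intro j _
      ring
    have hpos1 : 0 < ((X * Amix).mulVec z') j0 := by
      rw [hval1]
      have h2 := hBx j0
      have h3 := hq j0
      nlinarith
    have hneg1 : ((X * Amix).mulVec z') j0 ≤ 0 := by
      simp only [Matrix.mulVec, dotProduct]
      apply Finset.sum_nonpos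
      intro j _
      by_cases hj : j = j0
      · subst hj
        rw [hz'0, mul_zero]
      · exact mul_nonpos_of_nonpos_of_nonneg (hBoff j0 j (fun h => hj h.symm)) (hz'nn j)
    linarith
  -- separation
  obtain ⟨f, u, hfu, hfs⟩ := geometric_hahn_banach_point_closed
    (convex_convexHull ℝ (Set.range gcols))
    (((Set.finite_range gcols).isCompact_convexHull ℝ).isClosed) h0
  rw [map_zero] at hfu
  refine ⟨fun i => f (Pi.single i 1), fun i => ?_, fun c => ?_⟩
  · have : Pi.single i (1:ℝ) ∈ convexHull ℝ (Set.range gcols) :=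
      subset_convexHull ℝ _ ⟨Sum.inr i, rfl⟩
    exact hfu.trans (hfs _ this)
  · have hc : (fun i => (X * A) i c) ∈ convexHull ℝ (Set.range gcols) :=
      subset_convexHull ℝ _ ⟨Sum.inl c, rfl⟩
    have hval : f (fun i => (X * A) i c) = ∑ i, (X * A) i c * f (Pi.single i 1) := by
      have hrepr : (fun i => (X * A) i c) = ∑ i, ((X * A) i c) • (Pi.single i (1:ℝ) : Fin m → ℝ) := by
        ext j
        simp [Finset.sum_apply, Pi.single_apply]
      rw [hrepr]
      rw [map_sum]
      simp [smul_eq_mul]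
    have h2 : 0 < f (fun i => (X * A) i c) := hfu.trans (hfs _ hc)
    rw [hval] at h2
    have : Matrix.vecMul (fun i => f (Pi.single i 1)) (X * A) c
        = ∑ i, (X * A) i c * f (Pi.single i 1) := by
      simp [Matrix.vecMul, dotProduct, mul_comm]
    rw [this]
    exact h2
end

section
/- Let A be an m × n matrix (columns indexed by pairs (j,k)) with the P-property, and let c ∈ ℝⁿ. If v₁ and v₂ both satisfy cᵀ - vᵀA ≥ 0 entrywise and, for each j, (cᵀ - vᵀA)_{(j,k)} = 0 for at least one k ∈ {1,…,n_j}, then v₁ = v₂. -/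
private lemma det_expand_bool {p : ℕ} (g : Fin p → Bool → (Fin p → ℝ)) :
    Matrix.det (Matrix.of fun j => ∑ s : Bool, g j s) =
      ∑ r : Fin p → Bool, Matrix.det (Matrix.of fun j => g j (r j)) := by
  show Matrix.detRowAlternating (fun j => ∑ s : Bool, g j s) =
      ∑ r : Fin p → Bool, Matrix.detRowAlternating (fun j => g j (r j))
  exact (Matrix.detRowAlternating).toMultilinearMap.map_sum g

private lemma det_smul_rows {p : ℕ} (cf : Fin p → ℝ) (g : Fin p → (Fin p → ℝ)) :
    Matrix.det (Matrix.of fun j => cf j • g j) = (∏ j, cf j) * Matrix.det (Matrix.of g) := by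
  calc Matrix.det (Matrix.of fun j => cf j • g j)
      = Matrix.detRowAlternating.toMultilinearMap (fun j => cf j • g j) := rfl
    _ = (∏ j, cf j) • Matrix.detRowAlternating.toMultilinearMap g :=
        MultilinearMap.map_smul_univ _ cf g
    _ = (∏ j, cf j) * Matrix.det (Matrix.of g) := by rw [smul_eq_mul]; rfl

/-- Uniqueness in the Cottle–Dantzig theorem: the vector `v` with
`cᵀ - vᵀA ≥ 0` and a zero in each block is unique. -/
theorem cottle_dantzig_uniqueness (m : ℕ) (n : Fin m → ℕ)
    (A : Matrix (Fin m) ((j : Fin m) × Fin (n j)) ℝ)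
    (hP : (∀ r : (j : Fin m) → Fin (n j),
            0 < (Matrix.of fun i j => A i ⟨j, r j⟩ : Matrix (Fin m) (Fin m) ℝ).det) ∨
          (∀ r : (j : Fin m) → Fin (n j),
            (Matrix.of fun i j => A i ⟨j, r j⟩ : Matrix (Fin m) (Fin m) ℝ).det < 0))
    (c : ((j : Fin m) × Fin (n j)) → ℝ)
    (v₁ v₂ : Fin m → ℝ)
    (h₁ : ∀ col, 0 ≤ c col - Matrix.vecMul v₁ A col)
    (h₁z : ∀ j : Fin m, ∃ k : Fin (n j), c ⟨j, k⟩ - Matrix.vecMul v₁ A ⟨j, k⟩ = 0)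
    (h₂ : ∀ col, 0 ≤ c col - Matrix.vecMul v₂ A col)
    (h₂z : ∀ j : Fin m, ∃ k : Fin (n j), c ⟨j, k⟩ - Matrix.vecMul v₂ A ⟨j, k⟩ = 0) :
    v₁ = v₂ := by
  choose k₁ hk₁ using h₁z
  choose k₂ hk₂ using h₂z
  set d : Fin m → ℝ := v₁ - v₂ with hd
  set z : ((j : Fin m) × Fin (n j)) → ℝ := Matrix.vecMul d A with hz
  have hzcol : ∀ col, z col =
      (c col - Matrix.vecMul v₂ A col) - (c col - Matrix.vecMul v₁ A col) := by
    intro col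
    have h' : Matrix.vecMul d A = Matrix.vecMul v₁ A - Matrix.vecMul v₂ A := by
      rw [hd, Matrix.sub_vecMul]
    rw [hz, h']
    simp
  have ha : ∀ j, 0 ≤ z ⟨j, k₁ j⟩ := fun j => by
    have := hzcol ⟨j, k₁ j⟩
    have h2 := h₂ ⟨j, k₁ j⟩
    have h1 := hk₁ j
    linarith
  have hb : ∀ j, z ⟨j, k₂ j⟩ ≤ 0 := fun j => by
    have := hzcol ⟨j, k₂ j⟩
    have h1 := h₁ ⟨j, k₂ j⟩
    have h2 := hk₂ j
    linarith
  -- convex combination parameter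
  set t : Fin m → ℝ := fun j =>
    if z ⟨j, k₁ j⟩ = z ⟨j, k₂ j⟩ then 0
    else z ⟨j, k₁ j⟩ / (z ⟨j, k₁ j⟩ - z ⟨j, k₂ j⟩) with ht
  have ht01 : ∀ j, 0 ≤ t j ∧ t j ≤ 1 := by
    intro j
    simp only [ht]
    by_cases h : z ⟨j, k₁ j⟩ = z ⟨j, k₂ j⟩
    · simp [h]
    · have hab : 0 < z ⟨j, k₁ j⟩ - z ⟨j, k₂ j⟩ := by
        rcases lt_or_eq_of_le (sub_nonneg.mpr (le_trans (hb j) (ha j))) with h' | h'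
        · linarith
        · exact absurd (by linarith : z ⟨j, k₁ j⟩ = z ⟨j, k₂ j⟩) h
      simp only [h, if_false]
      constructor
      · exact div_nonneg (ha j) hab.le
      · rw [div_le_one hab]; linarith [hb j]
  have hteq : ∀ j, (1 - t j) * z ⟨j, k₁ j⟩ + t j * z ⟨j, k₂ j⟩ = 0 := by
    intro j
    simp only [ht]
    by_cases h : z ⟨j, k₁ j⟩ = z ⟨j, k₂ j⟩
    · have h0 : z ⟨j, k₁ j⟩ = 0 := le_antisymm (by rw [h]; exact hb j) (ha j)
      have h0' : z ⟨j, k₂ j⟩ = 0 := by rw [← h]; exact h0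
      simp [h, h0, h0']
    · have hab : z ⟨j, k₁ j⟩ - z ⟨j, k₂ j⟩ ≠ 0 := sub_ne_zero.mpr h
      simp only [h, if_false]
      field_simp
      ring
  -- the interpolated matrix
  set B : Matrix (Fin m) (Fin m) ℝ :=
    Matrix.of (fun i j => (1 - t j) * A i ⟨j, k₁ j⟩ + t j * A i ⟨j, k₂ j⟩) with hB
  set coeff : Fin m → Bool → ℝ := fun j s => if s then t j else 1 - t j with hcoeff
  set row : Fin m → Bool → (Fin m → ℝ) :=
    fun j s i => A i ⟨j, if s then k₂ j else k₁ j⟩ with hrow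
  -- determinant expansion
  have hexp : B.det = ∑ r : Fin m → Bool, (∏ j, coeff j (r j)) *
      (Matrix.of (fun i j => A i ⟨j, if r j then k₂ j else k₁ j⟩) :
        Matrix (Fin m) (Fin m) ℝ).det := by
    have hBT : B.transpose = Matrix.of (fun j => ∑ s : Bool, coeff j s • row j s) := by
      funext j i
      simp [hB, hcoeff, hrow, Fintype.sum_bool, Matrix.transpose_apply]
      ring
    rw [← Matrix.det_transpose B, hBT, det_expand_bool]
    apply Finset.sum_congr rfl
    intro r _
    rw [det_smul_rows]
    congr 1
    rw [← Matrix.det_transpose]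
    congr 1
  -- coefficients sum to 1
  have hsum1 : ∑ r : Fin m → Bool, (∏ j, coeff j (r j)) = 1 := by
    have hps := Finset.prod_univ_sum
        (fun _ : Fin m => (Finset.univ : Finset Bool)) (fun j s => coeff j s)
    rw [Fintype.piFinset_univ] at hps
    rw [← hps]
    have h' : ∀ j : Fin m, ∑ s : Bool, coeff j s = 1 := by
      intro j; simp [hcoeff, Fintype.sum_bool]
    simp only [h', Finset.prod_const_one]
  have hcnn : ∀ r : Fin m → Bool, 0 ≤ ∏ j, coeff j (r j) := by
    intro r
    apply Finset.prod_nonneg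
    intro j _
    rcases ht01 j with ⟨h0, h1⟩
    cases r j <;> simp [hcoeff] <;> linarith
  have hcpos : ∃ r : Fin m → Bool, 0 < ∏ j, coeff j (r j) := by
    by_contra h
    push_neg at h
    have h' : ∑ r : Fin m → Bool, (∏ j, coeff j (r j)) ≤ 0 :=
      Finset.sum_nonpos fun r _ => h r
    rw [hsum1] at h'; linarith
  -- det B ≠ 0
  have hdet : B.det ≠ 0 := by
    rcases hP with hpos | hneg
    · have h' : 0 < B.det := by
        rw [hexp]
        obtain ⟨r₀, hr₀⟩ := hcpos
        apply Finset.sum_pos'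
        · intro r _
          exact mul_nonneg (hcnn r) (hpos _).le
        · exact ⟨r₀, Finset.mem_univ _, mul_pos hr₀ (hpos _)⟩
      linarith
    · have h' : 0 < -B.det := by
        rw [hexp, ← Finset.sum_neg_distrib]
        obtain ⟨r₀, hr₀⟩ := hcpos
        apply Finset.sum_pos'
        · intro r _
          simp only [neg_nonneg]
          exact mul_nonpos_of_nonneg_of_nonpos (hcnn r) (hneg _).le
        · refine ⟨r₀, Finset.mem_univ _, ?_⟩
          have hmp := mul_pos hr₀
            (neg_pos.mpr (hneg (fun j => if r₀ j then k₂ j else k₁ j)))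
          simpa [mul_neg] using hmp
      linarith
  -- dᵀ B = 0
  have hvB : Matrix.vecMul d B = 0 := by
    funext j
    have hAsum : ∀ col, z col = ∑ i, d i * A i col := by
      intro col
      rw [hz]
      simp [Matrix.vecMul, dotProduct]
    have h' : Matrix.vecMul d B j = ∑ i, d i * B i j := by
      simp [Matrix.vecMul, dotProduct]
    rw [h']
    have expand : ∑ i, d i * B i j =
        (1 - t j) * (∑ i, d i * A i ⟨j, k₁ j⟩) + t j * (∑ i, d i * A i ⟨j, k₂ j⟩) := by
      rw [Finset.mul_sum, Finset.mul_sum, ← Finset.sum_add_distrib]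
      apply Finset.sum_congr rfl
      intro i _
      simp [hB]
      ring
    rw [expand, ← hAsum, ← hAsum, hteq j]
    rfl
  -- conclude d = 0
  have hdzero : d = 0 := by
    have hu : IsUnit B.det := isUnit_iff_ne_zero.mpr hdet
    have h' := congrArg (fun w => Matrix.vecMul w B⁻¹) hvB
    simpa [Matrix.vecMul_vecMul, Matrix.mul_nonsing_inv B hu, Matrix.zero_vecMul] using h'
  have hfin : v₁ - v₂ = 0 := hdzero
  exact sub_eq_zero.mp hfin
end

section
/- Let Ā be an m × m matrix with positive diagonal entries, nonpositive off-diagonal entries, and suppose eᵀĀ ≥ d·eᵀ for some d > 0, where e is the all-ones vector. Let E be obtained from the identity by replacing entry (j,m) with -Ā_{j,m}/Ā_{m,m} for j < m, and let Ā' be the (m-1) × (m-1) matrix obtained from EĀ by deleting row m and column m. Then eᵀĀ' ≥ d·eᵀ entrywise (with e now of length m-1). -/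
/-- Column-sum preservation under the pivot elimination step: deleting the last
row and column of `EĀ` keeps all column sums at least `d`. -/
theorem column_sums_preserved_by_elimination (m : ℕ) (d : ℝ) (hd : 0 < d)
    (A : Matrix (Fin (m + 1)) (Fin (m + 1)) ℝ)
    (hdiag : ∀ i, 0 < A i i)
    (hoff : ∀ i j, i ≠ j → A i j ≤ 0)
    (hsum : ∀ j, d ≤ ∑ i, A i j) :
    ∀ j : Fin m, d ≤ ∑ i : Fin m,
      ((Matrix.of fun i' j' =>
          (if i' = j' then (1 : ℝ)
           else if j' = Fin.last m then -A i' (Fin.last m) / A (Fin.last m) (Fin.last m)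
           else 0) : Matrix (Fin (m + 1)) (Fin (m + 1)) ℝ) * A).submatrix
        Fin.castSucc Fin.castSucc i j := by
  intro j
  set L := Fin.last m with hLdef
  have hALL : 0 < A L L := hdiag _
  set T := ∑ i, A i (Fin.castSucc j) with hT
  set U := ∑ i, A i L with hU
  have hTd : d ≤ T := hsum _
  have hUd : d ≤ U := hsum _
  have hALj : A L (Fin.castSucc j) ≤ 0 := hoff _ _ (Fin.castSucc_lt_last j).ne'
  have hentry : ∀ (i : Fin m) (j' : Fin (m + 1)),
      (((Matrix.of fun i' j' =>
          (if i' = j' then (1 : ℝ)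
           else if j' = Fin.last m then -A i' (Fin.last m) / A (Fin.last m) (Fin.last m)
           else 0) : Matrix (Fin (m + 1)) (Fin (m + 1)) ℝ) * A)) (Fin.castSucc i) j'
      = A (Fin.castSucc i) j' - A (Fin.castSucc i) L / A L L * A L j' := by
    intro i j'
    rw [Matrix.mul_apply, Fin.sum_univ_castSucc]
    have h1 : ∀ k : Fin m,
        (Matrix.of fun i' j' =>
          (if i' = j' then (1 : ℝ)
           else if j' = Fin.last m then -A i' (Fin.last m) / A (Fin.last m) (Fin.last m)
           else 0)) (Fin.castSucc i) (Fin.castSucc k)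
        = if i = k then (1 : ℝ) else 0 := by
      intro k
      simp only [Matrix.of_apply, Fin.castSucc_inj, (Fin.castSucc_lt_last k).ne, if_false]
    have h2 : (Matrix.of fun i' j' =>
          (if i' = j' then (1 : ℝ)
           else if j' = Fin.last m then -A i' (Fin.last m) / A (Fin.last m) (Fin.last m)
           else 0)) (Fin.castSucc i) (Fin.last m)
        = -A (Fin.castSucc i) (Fin.last m) / A (Fin.last m) (Fin.last m) := by
      simp [Matrix.of_apply, (Fin.castSucc_lt_last i).ne]
    rw [h2]
    have h3 : ∑ k : Fin m,
        (Matrix.of fun i' j' =>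
          (if i' = j' then (1 : ℝ)
           else if j' = Fin.last m then -A i' (Fin.last m) / A (Fin.last m) (Fin.last m)
           else 0)) (Fin.castSucc i) (Fin.castSucc k) * A (Fin.castSucc k) j'
        = A (Fin.castSucc i) j' := by
      rw [Finset.sum_congr rfl fun k _ => by rw [h1 k]]
      simp
    rw [h3, ← hLdef]
    ring
  have hsum1 : ∑ i : Fin m, A (Fin.castSucc i) (Fin.castSucc j) = T - A L (Fin.castSucc j) := by
    rw [hT, Fin.sum_univ_castSucc, ← hLdef]; ring
  have hsum2 : ∑ i : Fin m, A (Fin.castSucc i) L = U - A L L := by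
    rw [hU, Fin.sum_univ_castSucc, ← hLdef]; ring
  calc d ≤ T + (-A L (Fin.castSucc j)) * U / A L L := by
        have h0 : 0 ≤ (-A L (Fin.castSucc j)) * U / A L L :=
          div_nonneg (mul_nonneg (neg_nonneg.mpr hALj) (hd.le.trans hUd)) hALL.le
        linarith
    _ = (T - A L (Fin.castSucc j)) - (U - A L L) / A L L * A L (Fin.castSucc j) := by
        field_simp; ring
    _ = ∑ i : Fin m,
      ((Matrix.of fun i' j' =>
          (if i' = j' then (1 : ℝ)
           else if j' = Fin.last m then -A i' (Fin.last m) / A (Fin.last m) (Fin.last m)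
           else 0) : Matrix (Fin (m + 1)) (Fin (m + 1)) ℝ) * A).submatrix
        Fin.castSucc Fin.castSucc i j := by
        simp only [Matrix.submatrix_apply]
        rw [Finset.sum_congr rfl fun i _ => hentry i (Fin.castSucc j)]
        rw [Finset.sum_sub_distrib, hsum1]
        have : ∑ x : Fin m, A x.castSucc L / A L L * A L j.castSucc
            = (U - A L L) / A L L * A L j.castSucc := by
          rw [← Finset.sum_mul, ← Finset.sum_div, hsum2]
        rw [this]
end
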